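/- Let n ≥ 1 and let h ∈ ℤ[x_1, …, x_n] be homogeneous of degree n with respect to the grading in which the variable x_i has degree i. If h satisfies h(1 + x_1, x_1 + x_2, …, x_{n-1} + x_n) = h(x_1, …, x_n), then h = 0. -/

import Mathlib

open MvPolynomial

/-- The shift substitution on `ℤ[x_1, …, x_n]` (variable `i : Fin n` represents `x_{i+1}`),
sending `x_i ↦ x_{i-1} + x_i` with the convention `x_0 = 1`. -/
noncomputable def shiftSub (n : ℕ) :
    MvPolynomial (Fin n) ℤ →ₐ[ℤ] MvPolynomial (Fin n) ℤ :=
  aeval (fun i : Fin n =>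
    (if (i : ℕ) = 0 then 1
     else X (⟨(i : ℕ) - 1, Nat.lt_of_le_of_lt (Nat.sub_le _ _) i.2⟩ : Fin n)) + X i)

namespace ShiftAux

open Finset

/-- The elementary symmetric polynomial `esymm σ R k` is homogeneous of degree `k`. -/
lemma esymm_homog (m k : ℕ) : (esymm (Fin m) ℤ k).IsHomogeneous k := by
  apply MvPolynomial.IsHomogeneous.sum
  intro t ht
  have h2 : t.card = k := (Finset.mem_powersetCard.mp ht).2
  have := MvPolynomial.IsHomogeneous.prod t (fun i => (X i : MvPolynomial (Fin m) ℤ))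
    (fun _ => 1) (fun i _ => isHomogeneous_X ℤ i)
  rwa [Finset.sum_const, smul_eq_mul, mul_one, h2] at this

/-- `aeval` of a weighted homogeneous polynomial along homogeneous polynomials of the
matching degrees is homogeneous. -/
lemma aeval_weighted {σ τ : Type*} {φ : MvPolynomial σ ℤ} {w : σ → ℕ} {N : ℕ}
    (hφ : φ.IsWeightedHomogeneous w N) (g : σ → MvPolynomial τ ℤ)
    (hg : ∀ i, (g i).IsHomogeneous (w i)) :
    (aeval g φ).IsHomogeneous N := by
  rw [aeval_def, eval₂_eq]
  apply MvPolynomial.IsHomogeneous.sum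
  intro d hd
  rw [← zero_add N]
  apply MvPolynomial.IsHomogeneous.mul
  · rw [MvPolynomial.algebraMap_eq]
    exact isHomogeneous_C _ _
  · have hprod := MvPolynomial.IsHomogeneous.prod d.support (fun i => g i ^ d i)
      (fun i => w i * d i) (fun i _ => (hg i).pow (d i))
    have hN : N = ∑ i ∈ d.support, w i * d i := by
      rw [← hφ (mem_support_iff.mp hd), Finsupp.weight_apply]
      simp [Finsupp.sum, mul_comm]
    rw [hN]
    exact hprod

lemma multiset_esymm_cons {R : Type*} [CommSemiring R] (a : R) (s : Multiset R) (k : ℕ) :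
    (a ::ₘ s).esymm (k + 1) = s.esymm (k + 1) + a * s.esymm k := by
  simp only [Multiset.esymm, Multiset.powersetCard_cons, Multiset.map_add, Multiset.sum_add,
    Multiset.map_map, Function.comp_def, Multiset.prod_cons]
  rw [← Multiset.sum_map_mul_left]

/-- The specialization `ℤ[y_0, …, y_m] → ℤ[y_1, …, y_m]` sending `y_0 ↦ 1`. -/
noncomputable def spec (m : ℕ) :
    MvPolynomial (Fin (m + 1)) ℤ →ₐ[ℤ] MvPolynomial (Fin m) ℤ :=
  aeval (Fin.cases 1 X)

lemma spec_esymm (m k : ℕ) :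
    spec m (esymm (Fin (m + 1)) ℤ (k + 1)) =
      esymm (Fin m) ℤ (k + 1) + esymm (Fin m) ℤ k := by
  rw [spec, aeval_esymm_eq_multiset_esymm]
  have huniv : (Finset.univ.val : Multiset (Fin (m + 1))).map
      (Fin.cases 1 X : Fin (m + 1) → MvPolynomial (Fin m) ℤ)
      = (1 : MvPolynomial (Fin m) ℤ) ::ₘ Finset.univ.val.map X := by
    rw [Fin.univ_succ, Finset.cons_val, Multiset.map_cons, Finset.map_val, Multiset.map_map]
    simp [Function.comp_def]
  rw [huniv, multiset_esymm_cons, one_mul, ← esymm_eq_multiset_esymm]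

/-- The substitution `x_i ↦ e_{i+1}(y_1, …, y_m)`. -/
noncomputable def Phi (n m : ℕ) :
    MvPolynomial (Fin n) ℤ →ₐ[ℤ] MvPolynomial (Fin m) ℤ :=
  aeval (fun i : Fin n => esymm (Fin m) ℤ ((i : ℕ) + 1))

lemma spec_comp (n m : ℕ) :
    (spec m).comp (Phi n (m + 1)) = (Phi n m).comp (shiftSub n) := by
  apply algHom_ext
  intro i
  simp only [AlgHom.comp_apply, Phi, aeval_X, shiftSub, map_add]
  rw [spec_esymm]
  rcases Nat.eq_zero_or_pos (i : ℕ) with h0 | hpos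
  · rw [if_pos h0, map_one, h0, esymm_zero]
    exact add_comm _ _
  · rw [if_neg (Nat.pos_iff_ne_zero.mp hpos), aeval_X]
    show esymm (Fin m) ℤ ((i : ℕ) + 1) + esymm (Fin m) ℤ (i : ℕ)
        = esymm (Fin m) ℤ (((i : ℕ) - 1) + 1) + esymm (Fin m) ℤ ((i : ℕ) + 1)
    rw [Nat.sub_add_cancel hpos]
    exact add_comm _ _

/-- A homogeneous polynomial killed by the specialization `y_0 ↦ 1` vanishes, because the
specializations of its monomials are linearly independent (they have distinct degrees in the
remaining variables for a fixed degree pattern). -/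
lemma homog_spec_eq_zero {m N : ℕ} {Q : MvPolynomial (Fin (m + 1)) ℤ}
    (hQ : Q.IsHomogeneous N) (h0 : spec m Q = 0) : Q = 0 := by
  set Q' := finSuccEquiv ℤ m Q with hQ'def
  have hdegcons : ∀ (k : ℕ) (d : Fin m →₀ ℕ), (d.cons k).degree = k + d.degree := by
    intro k d
    show ((d.cons k).sum fun _ e => e) = k + d.sum fun _ e => e
    exact Finsupp.sum_cons m d k
  have key : ∀ (k : ℕ) (d : Fin m →₀ ℕ), coeff d (Q'.coeff k) ≠ 0 →
      d.degree + k = N := by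
    intro k d hd
    rw [hQ'def, finSuccEquiv_coeff_coeff] at hd
    have hw := hQ hd
    erw [← Finsupp.degree_eq_weight_one] at hw
    rw [hdegcons] at hw
    omega
  have hmem : ∀ k, Q'.coeff k ∈ homogeneousSubmodule (Fin m) ℤ (N - k) := by
    intro k
    rw [mem_homogeneousSubmodule]
    intro d hd
    erw [← Finsupp.degree_eq_weight_one]
    have := key k d hd
    omega
  have hzero : ∀ k, N < k → Q'.coeff k = 0 := by
    intro k hk
    by_contra hne
    obtain ⟨d, hd⟩ := MvPolynomial.ne_zero_iff.mp hne
    have := key k d hd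
    omega
  have heq : (spec m) =
      (((Polynomial.aeval (1 : MvPolynomial (Fin m) ℤ)).restrictScalars ℤ).comp
        (finSuccEquiv ℤ m).toAlgHom) := by
    apply algHom_ext
    intro i
    refine Fin.cases ?_ (fun j => ?_) i
    · simp [spec, finSuccEquiv_X_zero]
    · simp [spec, finSuccEquiv_X_succ]
  have hcomp : Polynomial.aeval (1 : MvPolynomial (Fin m) ℤ) Q' = 0 := by
    have h2 := AlgHom.congr_fun heq Q
    rw [h0] at h2
    simp only [AlgHom.comp_apply, AlgHom.coe_restrictScalars', AlgEquiv.toAlgHom_eq_coe,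
      AlgHom.coe_coe] at h2
    erw [← hQ'def] at h2
    exact h2.symm
  have hsum : ∑ k ∈ Finset.range (Q'.natDegree + 1), Q'.coeff k = 0 := by
    have h2 := Polynomial.aeval_eq_sum_range (p := Q') (1 : MvPolynomial (Fin m) ℤ)
    rw [hcomp] at h2
    have h3 := h2.symm
    simpa [smul_eq_mul] using h3
  have hQ'zero : Q' = 0 := by
    apply Polynomial.ext
    intro k
    rw [Polynomial.coeff_zero]
    by_cases hk : Q'.coeff k = 0
    · exact hk
    have hkN : k ≤ N := by
      by_contra hgt
      exact hk (hzero k (by omega))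
    have hkdeg : k ≤ Q'.natDegree := Polynomial.le_natDegree_of_ne_zero hk
    have hcomps := congrArg (homogeneousComponent (N - k)) hsum
    rw [map_sum, map_zero] at hcomps
    rw [Finset.sum_eq_single k] at hcomps
    · rwa [homogeneousComponent_of_mem (hmem k), if_pos rfl] at hcomps
    · intro j hj hjk
      by_cases hj0 : Q'.coeff j = 0
      · rw [hj0, map_zero]
      have hjN : j ≤ N := by
        by_contra hgt
        exact hj0 (hzero j (by omega))
      rw [homogeneousComponent_of_mem (hmem j), if_neg (by omega)]
    · intro hknot
      exact absurd (Finset.mem_range.mpr (Nat.lt_succ_of_le hkdeg)) hknot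
  have : Q = (finSuccEquiv ℤ m).symm Q' := by
    rw [hQ'def, AlgEquiv.symm_apply_apply]
  rw [this, hQ'zero, map_zero]

end ShiftAux

/-- If `h ∈ ℤ[x_1, …, x_n]` is homogeneous of degree `n` for the grading in which
`x_i` has degree `i`, and `h(1 + x_1, x_1 + x_2, …, x_{n-1} + x_n) = h`, then `h = 0`. -/
theorem shift_invariant_homogeneous_eq_zero (n : ℕ) (hn : 1 ≤ n)
    (h : MvPolynomial (Fin n) ℤ)
    (hhom : h.IsWeightedHomogeneous (fun i : Fin n => (i : ℕ) + 1) n)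
    (hinv : shiftSub n h = h) :
    h = 0 := by
  classical
  open ShiftAux in
  have key : ∀ m, Phi n m h = 0 := by
    intro m
    induction m with
    | zero =>
      have hz : (fun i : Fin n => esymm (Fin 0) ℤ ((i : ℕ) + 1)) = fun _ => 0 := by
        funext i
        rw [esymm]
        rw [show (Finset.univ : Finset (Fin 0)).powersetCard ((i : ℕ) + 1) = ∅ by
          rw [Finset.powersetCard_eq_empty]; simp]
        exact Finset.sum_empty
      rw [Phi, hz, aeval_zero']
      have hcc : constantCoeff h = 0 := by
        apply hhom.coeff_eq_zero
        rw [map_zero]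
        omega
      rw [hcc, map_zero]
    | succ m ih =>
      have hom : (Phi n (m + 1) h).IsHomogeneous n :=
        aeval_weighted hhom _ (fun i => esymm_homog (m + 1) ((i : ℕ) + 1))
      apply homog_spec_eq_zero hom
      have := AlgHom.congr_fun (spec_comp n m) h
      simp only [AlgHom.comp_apply] at this
      rw [this, hinv, ih]
  have hval : (esymmAlgHom (Fin n) ℤ n h : MvPolynomial (Fin n) ℤ) = 0 := by
    rw [esymmAlgHom_apply]
    exact key n
  have h0 : esymmAlgHom (Fin n) ℤ n h = 0 := by
    exact Subtype.ext hval
  have := esymmAlgHom_fin_injective (R := ℤ) (n := n) (m := n) le_rfl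
  apply this
  rw [h0, map_zero]
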